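/- Let Γ be a finitely generated group with finite symmetric generating set S, and N ⊴ Γ a normal subgroup of polynomial growth whose distortion Δ_N^Γ(R) = sup{|g|_{N∩S} : g ∈ N, |g|_S ≤ R} is bounded by a polynomial in R, where N∩S generates N. If moreover the quotient Λ = Γ/N has vanishing algebraic entropy with respect to π(S), then h_w(Γ,S) = h_w(Λ,π(S)) = 0. More generally, |Λ(R,π(S))| ≤ |Γ(R,S)| ≤ |Γ(2R,S) ∩ N| · |Λ(R,π(S))|. -/

import Mathlib

open Filter Topology

def wordBall {G : Type*} [Group G] (S : Set G) (R : ℕ) : Set G :=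
  {g | ∃ l : List G, (∀ x ∈ l, x ∈ S) ∧ l.length ≤ R ∧ l.prod = g}

namespace WordBallAux

variable {G : Type*} [Group G]

theorem one_mem (S : Set G) (R : ℕ) : (1 : G) ∈ wordBall S R :=
  ⟨[], by simp, by simp, by simp⟩

theorem mono (S : Set G) {R R' : ℕ} (h : R ≤ R') : wordBall S R ⊆ wordBall S R' :=
  fun _ ⟨l, hl, hlen, hp⟩ => ⟨l, hl, hlen.trans h, hp⟩

theorem mul_mem {S : Set G} {R R' : ℕ} {g h : G} (hg : g ∈ wordBall S R)
    (hh : h ∈ wordBall S R') : g * h ∈ wordBall S (R + R') := by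
  obtain ⟨l, hl, hlen, hp⟩ := hg
  obtain ⟨l', hl', hlen', hp'⟩ := hh
  refine ⟨l ++ l', ?_, by simpa using Nat.add_le_add hlen hlen', by simp [hp, hp']⟩
  intro x hx
  rcases List.mem_append.1 hx with h | h
  exacts [hl x h, hl' x h]

theorem inv_mem {S : Set G} (hsym : ∀ x ∈ S, x⁻¹ ∈ S) {R : ℕ} {g : G}
    (hg : g ∈ wordBall S R) : g⁻¹ ∈ wordBall S R := by
  obtain ⟨l, hl, hlen, hp⟩ := hg
  refine ⟨(l.map fun x => x⁻¹).reverse, ?_, by simpa using hlen, ?_⟩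
  · intro x hx
    simp only [List.mem_reverse, List.mem_map] at hx
    obtain ⟨a, ha, rfl⟩ := hx
    exact hsym a (hl a ha)
  · rw [← List.prod_inv_reverse, hp]

theorem finite {S : Set G} (hS : S.Finite) : ∀ R : ℕ, (wordBall S R).Finite := by
  intro R
  induction R with
  | zero =>
    refine Set.Finite.subset (Set.finite_singleton 1) ?_
    rintro g ⟨l, hl, hlen, hp⟩
    simp only [Nat.le_zero, List.length_eq_zero_iff] at hlen
    simp [hlen] at hp
    simp [← hp]
  | succ R ih =>
    refine Set.Finite.subset (ih.union (hS.biUnion fun s _ => ih.image (s * ·))) ?_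
    rintro g ⟨l, hl, hlen, hp⟩
    cases l with
    | nil => exact Or.inl (by simpa [← hp] using one_mem S R)
    | cons a l' =>
      refine Or.inr (Set.mem_biUnion (hl a (by simp)) ?_)
      exact ⟨l'.prod, ⟨l', fun x hx => hl x (by simp [hx]), by simpa using hlen, rfl⟩,
        by simp [← hp]⟩

theorem exists_preimage_list {H : Type*} [Group H] (φ : G →* H) (S : Set G) :
    ∀ l' : List H, (∀ x ∈ l', x ∈ φ '' S) →
      ∃ l : List G, (∀ x ∈ l, x ∈ S) ∧ l.length = l'.length ∧ φ l.prod = l'.prod := by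
  intro l'
  induction l' with
  | nil => exact fun _ => ⟨[], by simp, by simp, by simp⟩
  | cons a t ih =>
    intro hl
    obtain ⟨b, hb, rfl⟩ := hl a (by simp)
    obtain ⟨l, h1, h2, h3⟩ := ih fun x hx => hl x (by simp [hx])
    refine ⟨b :: l, ?_, by simp [h2], by simp [h3]⟩
    intro x hx
    rcases List.mem_cons.1 hx with rfl | hx
    exacts [hb, h1 x hx]

theorem image_eq {H : Type*} [Group H] (φ : G →* H) (S : Set G) (R : ℕ) :
    wordBall (φ '' S) R = φ '' wordBall S R := by
  ext h
  constructor
  · rintro ⟨l', hl', hlen, hp⟩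
    obtain ⟨l, h1, h2, h3⟩ := exists_preimage_list φ S l' hl'
    exact ⟨l.prod, ⟨l, h1, h2 ▸ hlen, rfl⟩, by rw [h3, hp]⟩
  · rintro ⟨g, ⟨l, hl, hlen, hp⟩, rfl⟩
    refine ⟨l.map φ, ?_, by simpa using hlen, by rw [← hp]; exact (List.prod_hom l φ)⟩
    rintro x hx
    simp only [List.mem_map] at hx
    obtain ⟨a, ha, rfl⟩ := hx
    exact ⟨a, hl a ha, rfl⟩

/-- `log(2R+1)/R → 0`. -/
theorem tendsto_log_linear : Tendsto (fun R : ℕ => Real.log (2 * R + 1) / R) atTop (𝓝 0) := by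
  have hx : Tendsto (fun x : ℝ => Real.log x / x) atTop (𝓝 0) :=
    Real.isLittleO_log_id_atTop.tendsto_div_nhds_zero
  have hlogn : Tendsto (fun n : ℕ => Real.log n / n) atTop (𝓝 0) :=
    hx.comp tendsto_natCast_atTop_atTop
  have hupper : Tendsto (fun n : ℕ => Real.log 3 / n + Real.log n / n) atTop (𝓝 0) := by
    simpa using (tendsto_const_div_atTop_nhds_zero_nat (Real.log 3)).add hlogn
  refine tendsto_of_tendsto_of_tendsto_of_le_of_le' tendsto_const_nhds hupper ?_ ?_
  · filter_upwards [eventually_ge_atTop 1] with R hR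
    have h1 : (1 : ℝ) ≤ 2 * (R : ℝ) + 1 := by
      have := (Nat.cast_nonneg R : (0:ℝ) ≤ R); linarith
    exact div_nonneg (Real.log_nonneg h1) (Nat.cast_nonneg R)
  · filter_upwards [eventually_ge_atTop 1] with R hR
    have hRpos : (0 : ℝ) < R := by exact_mod_cast hR
    have hR1 : (1 : ℝ) ≤ R := by exact_mod_cast hR
    have hle : (2 * (R : ℝ) + 1) ≤ 3 * R := by linarith
    have hlog : Real.log (2 * (R : ℝ) + 1) ≤ Real.log 3 + Real.log R := by
      calc Real.log (2 * (R : ℝ) + 1) ≤ Real.log (3 * R) :=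
            Real.log_le_log (by positivity) hle
        _ = Real.log 3 + Real.log R := Real.log_mul (by norm_num) (ne_of_gt hRpos)
    calc Real.log (2 * (R : ℝ) + 1) / R ≤ (Real.log 3 + Real.log R) / R :=
          div_le_div_of_nonneg_right hlog hRpos.le
      _ = Real.log 3 / R + Real.log R / R := add_div _ _ _

end WordBallAux

theorem entropy_zero_of_polynomial_distortion {Γ : Type*} [Group Γ]
    (N : Subgroup Γ) [N.Normal]
    (S : Set Γ) (hfin : S.Finite) (hsym : ∀ x ∈ S, x⁻¹ ∈ S)
    (hgen : Subgroup.closure S = ⊤)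
    (hNgen : Subgroup.closure ((N : Set Γ) ∩ S) = N)
    (CN mN : ℕ)
    (hNpoly : ∀ R : ℕ, 1 ≤ R →
      Nat.card (wordBall ((N : Set Γ) ∩ S) R) ≤ CN * R ^ mN)
    (CD mD : ℕ)
    (hdist : ∀ R : ℕ, ∀ g ∈ N, g ∈ wordBall S R →
      g ∈ wordBall ((N : Set Γ) ∩ S) (CD * R ^ mD))
    (hΛ : Tendsto (fun R : ℕ =>
        Real.log (Nat.card (wordBall ((QuotientGroup.mk' N) '' S) R)) / R) atTop (𝓝 0)) :
    (∀ R : ℕ,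
      Nat.card (wordBall ((QuotientGroup.mk' N) '' S) R) ≤ Nat.card (wordBall S R) ∧
      Nat.card (wordBall S R) ≤
        Nat.card ((wordBall S (2 * R) ∩ (N : Set Γ) : Set Γ)) *
          Nat.card (wordBall ((QuotientGroup.mk' N) '' S) R)) ∧
    Tendsto (fun R : ℕ => Real.log (Nat.card (wordBall S R)) / R) atTop (𝓝 0) := by
  classical
  set π : Γ →* Γ ⧸ N := QuotientGroup.mk' N with hπdef
  have hball : ∀ R, (wordBall S R).Finite := WordBallAux.finite hfin
  have hballN : ∀ R, (wordBall ((N : Set Γ) ∩ S) R).Finite :=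
    WordBallAux.finite (hfin.subset Set.inter_subset_right)
  have himg : ∀ R, wordBall ((π : Γ →* Γ ⧸ N) '' S) R = π '' wordBall S R :=
    fun R => WordBallAux.image_eq π S R
  have hballQ : ∀ R, (wordBall ((π : Γ →* Γ ⧸ N) '' S) R).Finite :=
    fun R => (himg R) ▸ (hball R).image π
  have hcardS : ∀ R, 1 ≤ Nat.card (wordBall S R) := by
    intro R
    haveI := (hball R).to_subtype
    haveI : Nonempty (wordBall S R) := ⟨⟨1, WordBallAux.one_mem S R⟩⟩
    exact Nat.card_pos
  have hcardQ : ∀ R, 1 ≤ Nat.card (wordBall ((π : Γ →* Γ ⧸ N) '' S) R) := by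
    intro R
    haveI := (hballQ R).to_subtype
    haveI : Nonempty (wordBall ((π : Γ →* Γ ⧸ N) '' S) R) :=
      ⟨⟨1, WordBallAux.one_mem _ R⟩⟩
    exact Nat.card_pos
  have hcardInt : ∀ R, 1 ≤ Nat.card ((wordBall S (2 * R) ∩ (N : Set Γ) : Set Γ)) := by
    intro R
    haveI := ((hball (2 * R)).inter_of_left (N : Set Γ)).to_subtype
    haveI : Nonempty ((wordBall S (2 * R) ∩ (N : Set Γ) : Set Γ)) :=
      ⟨⟨1, WordBallAux.one_mem S (2 * R), N.one_mem⟩⟩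
    exact Nat.card_pos
  -- first inequality
  have key1 : ∀ R, Nat.card (wordBall ((π : Γ →* Γ ⧸ N) '' S) R) ≤ Nat.card (wordBall S R) := by
    intro R
    rw [himg R]
    exact Nat.card_image_le (hball R)
  -- second inequality
  have key2 : ∀ R, Nat.card (wordBall S R) ≤
      Nat.card ((wordBall S (2 * R) ∩ (N : Set Γ) : Set Γ)) *
        Nat.card (wordBall ((π : Γ →* Γ ⧸ N) '' S) R) := by
    intro R
    haveI := ((hball (2 * R)).inter_of_left (N : Set Γ)).to_subtype
    haveI := (hballQ R).to_subtype
    -- a section of π on the ball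
    set σ : Γ ⧸ N → Γ := fun lam =>
      if h : ∃ g ∈ wordBall S R, π g = lam then h.choose else 1 with hσdef
    have hσ : ∀ g ∈ wordBall S R, σ (π g) ∈ wordBall S R ∧ π (σ (π g)) = π g := by
      intro g hg
      have h : ∃ g' ∈ wordBall S R, π g' = π g := ⟨g, hg, rfl⟩
      simp only [hσdef, dif_pos h]
      exact ⟨h.choose_spec.1, h.choose_spec.2⟩
    have hmemInt : ∀ x ∈ wordBall S R,
        x * (σ (π x))⁻¹ ∈ wordBall S (2 * R) ∩ (N : Set Γ) := by
      intro x hx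
      obtain ⟨hb, hπx⟩ := hσ x hx
      refine ⟨?_, ?_⟩
      · have := WordBallAux.mul_mem hx (WordBallAux.inv_mem hsym hb)
        rwa [two_mul]
      · have h1 : π (x * (σ (π x))⁻¹) = 1 := by
          rw [map_mul, map_inv, hπx, mul_inv_cancel]
        exact (QuotientGroup.eq_one_iff _).1 h1
    let f : (wordBall S R) →
        ((wordBall S (2 * R) ∩ (N : Set Γ) : Set Γ)) × (wordBall ((π : Γ →* Γ ⧸ N) '' S) R) :=
      fun x => (⟨x.1 * (σ (π x.1))⁻¹, hmemInt x.1 x.2⟩,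
        ⟨π x.1, (himg R) ▸ Set.mem_image_of_mem π x.2⟩)
    have hinj : Function.Injective f := by
      intro x y hxy
      have h2 : π x.1 = π y.1 := congrArg (fun p => (p.2 : Γ ⧸ N)) hxy
      have h1 : x.1 * (σ (π x.1))⁻¹ = y.1 * (σ (π y.1))⁻¹ :=
        congrArg (fun p => (p.1 : Γ)) hxy
      rw [h2] at h1
      exact Subtype.ext (mul_right_cancel h1)
    calc Nat.card (wordBall S R)
        ≤ Nat.card (((wordBall S (2 * R) ∩ (N : Set Γ) : Set Γ)) ×
            (wordBall ((π : Γ →* Γ ⧸ N) '' S) R)) :=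
          Nat.card_le_card_of_injective f hinj
      _ = _ := Nat.card_prod _ _
  refine ⟨fun R => ⟨key1 R, key2 R⟩, ?_⟩
  -- the entropy limit
  have hCN : 1 ≤ CN := by
    have h1 := hNpoly 1 le_rfl
    have h2 : 1 ≤ Nat.card (wordBall ((N : Set Γ) ∩ S) 1) := by
      haveI := (hballN 1).to_subtype
      haveI : Nonempty (wordBall ((N : Set Γ) ∩ S) 1) := ⟨⟨1, WordBallAux.one_mem _ 1⟩⟩
      exact Nat.card_pos
    simpa using h2.trans h1
  -- bound on the intersection card
  have hA : ∀ R, Nat.card ((wordBall S (2 * R) ∩ (N : Set Γ) : Set Γ)) ≤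
      CN * (CD * (2 * R) ^ mD + 1) ^ mN := by
    intro R
    have hsub : (wordBall S (2 * R) ∩ (N : Set Γ) : Set Γ) ⊆
        wordBall ((N : Set Γ) ∩ S) (CD * (2 * R) ^ mD + 1) := by
      rintro g ⟨hg, hgN⟩
      exact WordBallAux.mono _ (Nat.le_succ _) (hdist (2 * R) g hgN hg)
    calc Nat.card ((wordBall S (2 * R) ∩ (N : Set Γ) : Set Γ))
        ≤ Nat.card (wordBall ((N : Set Γ) ∩ S) (CD * (2 * R) ^ mD + 1)) :=
          Nat.card_mono (hballN _) hsub
      _ ≤ CN * (CD * (2 * R) ^ mD + 1) ^ mN := hNpoly _ (Nat.le_add_left 1 _)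
  -- the limiting upper bound function
  have hT : Tendsto (fun R : ℕ =>
      (Real.log CN + mN * Real.log (CD + 1)) / R
        + (mN * mD : ℝ) * (Real.log (2 * R + 1) / R)
        + Real.log (Nat.card (wordBall ((π : Γ →* Γ ⧸ N) '' S) R)) / R)
      atTop (𝓝 0) := by
    have h1 := tendsto_const_div_atTop_nhds_zero_nat (Real.log CN + mN * Real.log (CD + 1))
    have h2 := WordBallAux.tendsto_log_linear.const_mul ((mN : ℝ) * mD)
    simpa using (h1.add h2).add hΛ
  refine tendsto_of_tendsto_of_tendsto_of_le_of_le' tendsto_const_nhds hT ?_ ?_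
  · filter_upwards [eventually_ge_atTop 1] with R hR
    exact div_nonneg (Real.log_nonneg (by exact_mod_cast hcardS R)) (Nat.cast_nonneg R)
  · filter_upwards [eventually_ge_atTop 1] with R hR
    have hRpos : (0 : ℝ) < R := by exact_mod_cast hR
    set A := Nat.card ((wordBall S (2 * R) ∩ (N : Set Γ) : Set Γ)) with hAdef
    set B := Nat.card (wordBall ((π : Γ →* Γ ⧸ N) '' S) R) with hBdef
    have hA1 : 1 ≤ A := hcardInt R
    have hB1 : 1 ≤ B := hcardQ R
    -- real log chain
    have step1 : Real.log (Nat.card (wordBall S R)) ≤ Real.log A + Real.log B := by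
      have hab : (Nat.card (wordBall S R) : ℝ) ≤ (A : ℝ) * B := by
        exact_mod_cast key2 R
      calc Real.log (Nat.card (wordBall S R)) ≤ Real.log ((A : ℝ) * B) :=
            Real.log_le_log (by exact_mod_cast hcardS R) hab
        _ = Real.log A + Real.log B :=
            Real.log_mul (by exact_mod_cast Nat.one_le_iff_ne_zero.1 hA1)
              (by exact_mod_cast Nat.one_le_iff_ne_zero.1 hB1)
    have step2 : Real.log A ≤
        Real.log CN + mN * (Real.log (CD + 1) + mD * Real.log (2 * R + 1)) := by
      have hk : (CD * (2 * R) ^ mD + 1 : ℕ) ≤ (CD + 1) * (2 * R + 1) ^ mD := by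
        have h1 : CD * (2 * R) ^ mD ≤ CD * (2 * R + 1) ^ mD :=
          Nat.mul_le_mul_left _ (Nat.pow_le_pow_left (by omega) _)
        have h2 : 1 ≤ (2 * R + 1) ^ mD := Nat.one_le_pow _ _ (by omega)
        calc CD * (2 * R) ^ mD + 1 ≤ CD * (2 * R + 1) ^ mD + (2 * R + 1) ^ mD :=
              Nat.add_le_add h1 h2
          _ = (CD + 1) * (2 * R + 1) ^ mD := by ring
      have hAle : (A : ℝ) ≤ (CN : ℝ) * (((CD : ℝ) + 1) * (2 * (R : ℝ) + 1) ^ mD) ^ mN := by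
        have h := (hA R).trans (Nat.mul_le_mul_left CN (Nat.pow_le_pow_left hk mN))
        calc (A : ℝ) ≤ ((CN * ((CD + 1) * (2 * R + 1) ^ mD) ^ mN : ℕ) : ℝ) := by
              exact_mod_cast h
          _ = (CN : ℝ) * (((CD : ℝ) + 1) * (2 * (R : ℝ) + 1) ^ mD) ^ mN := by
              push_cast; ring
      have hpos : (0 : ℝ) < A := by exact_mod_cast hA1
      have hCN' : (CN : ℝ) ≠ 0 := by exact_mod_cast Nat.one_le_iff_ne_zero.1 hCN
      calc Real.log A ≤ Real.log ((CN : ℝ) * (((CD : ℝ) + 1) * (2 * (R : ℝ) + 1) ^ mD) ^ mN) :=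
            Real.log_le_log hpos hAle
        _ = Real.log CN + mN * Real.log (((CD : ℝ) + 1) * (2 * (R : ℝ) + 1) ^ mD) := by
            rw [Real.log_mul hCN' (by positivity), Real.log_pow]
        _ = Real.log CN + mN * (Real.log ((CD : ℝ) + 1) + mD * Real.log (2 * (R : ℝ) + 1)) := by
            rw [Real.log_mul (by positivity) (by positivity), Real.log_pow]
    have := div_le_div_of_nonneg_right
      (step1.trans (add_le_add_left step2 (Real.log B))) hRpos.le
    calc Real.log (Nat.card (wordBall S R)) / R
        ≤ (Real.log CN + mN * (Real.log (CD + 1) + mD * Real.log (2 * R + 1))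
            + Real.log B) / R := this
      _ = (Real.log CN + mN * Real.log (CD + 1)) / R
            + (mN * mD : ℝ) * (Real.log (2 * R + 1) / R)
            + Real.log B / R := by
          field_simp
          ring
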